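/- Let $G$ be a finitely generated amenable group with a bi-invariant mean, and let $H \le G$ be a subgroup of infinite index. Then for every $n \in \mathbb{N}_{\ge 1}$ there exist pairwise disjoint subsets $T^1, \dots, T^n \subseteq G$ such that each $T^k$ is left $H$-invariant ($hT^k = T^k$ for all $h \in H$) and each $T^k$ is left-thick: for every finite $F \subseteq G$ there exists $g \in G$ with $F g \subseteq T^k$. -/

import Mathlib

/-- The space `ℓ∞(G)` of bounded real-valued functions on `G`, as a submodule of `G → ℝ`. -/
def Linf (G : Type*) : Submodule ℝ (G → ℝ) where
  carrier := {f | ∃ C : ℝ, ∀ x, |f x| ≤ C}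
  add_mem' := by
    rintro f g ⟨C, hC⟩ ⟨D, hD⟩
    exact ⟨C + D, fun x => by
      simpa using (abs_add_le (f x) (g x)).trans (add_le_add (hC x) (hD x))⟩
  zero_mem' := ⟨0, fun x => by simp⟩
  smul_mem' := by
    rintro c f ⟨C, hC⟩
    exact ⟨|c| * C, fun x => by
      simpa [abs_mul] using mul_le_mul_of_nonneg_left (hC x) (abs_nonneg c)⟩

open Classical in
/-- The characteristic function of a set, as an element of `ℓ∞`. -/
noncomputable def chi {G : Type*} (A : Set G) : Linf G :=
  ⟨fun x => if x ∈ A then 1 else 0, ⟨1, fun x => by by_cases h : x ∈ A <;> simp [h]⟩⟩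

/-- Left translation action on `ℓ∞(G)`: `(g • φ)(x) = φ(g⁻¹ x)`. -/
def lT {G : Type*} [Group G] (g : G) (φ : Linf G) : Linf G :=
  ⟨fun x => (φ : G → ℝ) (g⁻¹ * x), by obtain ⟨C, hC⟩ := φ.2; exact ⟨C, fun x => hC _⟩⟩

/-- Right translation action on `ℓ∞(G)`: `(φ • g)(x) = φ(x g)`. -/
def rT {G : Type*} [Group G] (g : G) (φ : Linf G) : Linf G :=
  ⟨fun x => (φ : G → ℝ) (x * g), by obtain ⟨C, hC⟩ := φ.2; exact ⟨C, fun x => hC _⟩⟩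

/-- A mean on `G`: a normalized positive linear functional on `ℓ∞(G)`. -/
structure Mean (G : Type*) where
  toFun : Linf G →ₗ[ℝ] ℝ
  normalized : toFun (chi Set.univ) = 1
  pos : ∀ φ : Linf G, (∀ x, 0 ≤ (φ : G → ℝ) x) → 0 ≤ toFun φ

/-- A mean is left invariant if it is invariant under left translations. -/
def Mean.LeftInvariant {G : Type*} [Group G] (m : Mean G) : Prop :=
  ∀ (g : G) (φ : Linf G), m.toFun (lT g φ) = m.toFun φ

/-- A mean is right invariant if it is invariant under right translations. -/
def Mean.RightInvariant {G : Type*} [Group G] (m : Mean G) : Prop :=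
  ∀ (g : G) (φ : Linf G), m.toFun (rT g φ) = m.toFun φ


open scoped Pointwise

lemma index_eq_zero_of_rightRel {G : Type*} [Group G] (H : Subgroup G)
    (hH : Infinite (Quotient (QuotientGroup.rightRel H))) : H.index = 0 := by
  have : Infinite (G ⧸ H) :=
    (QuotientGroup.quotientRightRelEquivQuotientLeftRel H).infinite_iff.mp hH
  simp [Subgroup.index, Nat.card_eq_zero_of_infinite]

lemma separation {G : Type*} [Group G] (H : Subgroup G) (hH : H.index = 0)
    (B S : Finset G) : ∃ g : G, ∀ b ∈ B, ∀ s ∈ S, b * g * s⁻¹ ∉ H := by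
  by_contra hcon
  push_neg at hcon
  classical
  have hcovers : ⋃ p ∈ B ×ˢ S,
      ((p.1⁻¹ * p.2) • ((H.comap (MulAut.conj p.2).toMonoidHom : Subgroup G) : Set G)) =
      Set.univ := by
    ext g
    simp only [Set.mem_iUnion, Set.mem_univ, iff_true]
    obtain ⟨b, hb, s, hs, hmem⟩ := hcon g
    refine ⟨(b, s), Finset.mem_product.mpr ⟨hb, hs⟩, ?_⟩
    simp only [Set.mem_smul_set_iff_inv_smul_mem, smul_eq_mul, SetLike.mem_coe,
      Subgroup.mem_comap, MulEquiv.coe_toMonoidHom, MulAut.conj_apply]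
    convert hmem using 2
    group
  obtain ⟨p, _, hfi⟩ := Subgroup.exists_finiteIndex_of_leftCoset_cover hcovers
  have : (H.comap (MulAut.conj p.2).toMonoidHom).index = H.index :=
    Subgroup.index_comap_of_surjective H (MulAut.conj p.2).surjective
  exact hfi.index_ne_zero (this.trans hH)

lemma countable_of_fg {G : Type*} [Group G] (Sg : Finset G)
    (hgen : Subgroup.closure (Sg : Set G) = ⊤) : Countable G := by
  have hc : Countable (FreeGroup {x // x ∈ Sg}) := by unfold FreeGroup; infer_instance
  have hsurj : Function.Surjective (FreeGroup.lift (Subtype.val : {x // x ∈ Sg} → G)) := by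
    rw [← MonoidHom.range_eq_top, FreeGroup.range_lift_eq_closure, Subtype.range_val]
    exact hgen
  exact hsurj.countable

private theorem main_construction {G : Type*} [Group G]
    (Sg : Finset G) (hgen : Subgroup.closure (Sg : Set G) = ⊤)
    (H : Subgroup G) (hH : Infinite (Quotient (QuotientGroup.rightRel H)))
    (n : ℕ) (hn : 1 ≤ n) :
    ∃ T : Fin n → Set G,
      (∀ k j, k ≠ j → Disjoint (T k) (T j))
      ∧ (∀ k, ∀ h ∈ H, ∀ x : G, x ∈ T k ↔ h * x ∈ T k)
      ∧ (∀ k, ∀ F : Set G, F.Finite → ∃ g : G, ∀ f ∈ F, f * g ∈ T k) := by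
  classical
  have hidx := index_eq_zero_of_rightRel H hH
  have hcount : Countable G := countable_of_fg Sg hgen
  obtain ⟨e, he⟩ := exists_surjective_nat G
  -- balls
  set ball : ℕ → Finset G := fun j => (Finset.range (j + 1)).image e with hball
  have hball_mono : ∀ {i j : ℕ}, i ≤ j → ball i ⊆ ball j := by
    intro i j hij
    exact Finset.image_subset_image (Finset.range_subset_range.mpr (by omega))
  have hball_cover : ∀ F : Set G, F.Finite → ∃ j, F ⊆ (ball j : Set G) := by
    intro F hF
    refine ⟨hF.toFinset.sup fun x => (he x).choose, ?_⟩
    intro x hx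
    have hx' : x ∈ hF.toFinset := hF.mem_toFinset.mpr hx
    have : (he x).choose ∈ Finset.range ((hF.toFinset.sup fun x => (he x).choose) + 1) := by
      rw [Finset.mem_range]
      exact Nat.lt_succ_of_le (Finset.le_sup (f := fun x => (he x).choose) hx')
    simpa [hball, (he x).choose_spec] using Finset.mem_image_of_mem e this
  -- translate choice
  set gch : Finset G → ℕ → G := fun U j => (separation H hidx (ball j) U).choose with hgch
  have hgch_spec : ∀ (U : Finset G) (j : ℕ), ∀ b ∈ ball j, ∀ s ∈ U,
      b * gch U j * s⁻¹ ∉ H := fun U j => (separation H hidx (ball j) U).choose_spec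
  -- used sets
  set U : ℕ → Finset G := fun j => Nat.rec (∅ : Finset G)
    (fun i Ui => Ui ∪ (ball i).image (· * gch Ui i)) j with hU
  set g : ℕ → G := fun j => gch (U j) j with hg
  set A : ℕ → Finset G := fun j => (ball j).image (· * g j) with hA
  have hUsucc : ∀ j, U (j + 1) = U j ∪ A j := fun j => rfl
  have hU_mono : ∀ {i j : ℕ}, i ≤ j → U i ⊆ U j := by
    intro i j hij
    induction j with
    | zero => simpa [Nat.le_zero.mp hij]
    | succ j ih =>
      rcases Nat.lt_or_ge i (j + 1) with h | h
      · exact (ih (by omega)).trans (by rw [hUsucc]; exact Finset.subset_union_left)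
      · have : i = j + 1 := by omega
        simp [this]
  have hA_subU : ∀ i j, i < j → (A i : Set G) ⊆ U j := by
    intro i j hij x hx
    have : x ∈ U (i + 1) := by rw [hUsucc]; exact Finset.mem_union_right _ hx
    exact hU_mono hij this
  -- key: disjoint coset images
  have hkey : ∀ i j, i < j → ∀ x ∈ A i, ∀ y ∈ A j, y * x⁻¹ ∉ H := by
    intro i j hij x hx y hy
    obtain ⟨b, hb, rfl⟩ := Finset.mem_image.mp hy
    exact hgch_spec (U j) j b hb x (hA_subU i j hij hx)
  -- the sets
  refine ⟨fun k => {x | ∃ j, j % n = (k : ℕ) ∧ ∃ a ∈ A j, x * a⁻¹ ∈ H}, ?_, ?_, ?_⟩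
  · -- disjoint
    intro k k' hkk'
    rw [Set.disjoint_left]
    rintro x ⟨j, hjk, a, ha, hxa⟩ ⟨j', hjk', a', ha', hxa'⟩
    have hjj' : j ≠ j' := fun h => hkk' (Fin.ext (by rw [← hjk, ← hjk', h]))
    rcases Nat.lt_or_ge j j' with h | h
    · refine hkey j j' h a ha a' ha' ?_
      have := mul_mem (H.inv_mem hxa') hxa
      simpa [mul_inv_rev, mul_assoc] using this
    · refine hkey j' j (by omega) a' ha' a ha ?_
      have := mul_mem (H.inv_mem hxa) hxa'
      simpa [mul_inv_rev, mul_assoc] using this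
  · -- H-invariant
    intro k h hh x
    constructor
    · rintro ⟨j, hjk, a, ha, hxa⟩
      exact ⟨j, hjk, a, ha, by simpa [mul_assoc] using mul_mem hh hxa⟩
    · rintro ⟨j, hjk, a, ha, hxa⟩
      refine ⟨j, hjk, a, ha, ?_⟩
      have := mul_mem (H.inv_mem hh) hxa
      simpa [mul_assoc] using this
  · -- thick
    intro k F hF
    obtain ⟨j0, hj0⟩ := hball_cover F hF
    set j := j0 * n + (k : ℕ) with hj
    have hjmod : j % n = (k : ℕ) := by
      rw [hj, Nat.mul_comm, Nat.mul_add_mod]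
      exact Nat.mod_eq_of_lt k.isLt
    have hj0j : j0 ≤ j := by
      have : j0 ≤ j0 * n := Nat.le_mul_of_pos_right j0 (by omega)
      omega
    refine ⟨g j, fun f hf => ⟨j, hjmod, f * g j, ?_, by simpa [mul_assoc] using one_mem H⟩⟩
    exact Finset.mem_image_of_mem _ (hball_mono hj0j (hj0 hf))


/-- Let `G` be a finitely generated amenable group (with a bi-invariant
mean) and `H ≤ G` of infinite index. Then for every `n ≥ 1` there exist pairwise
disjoint, left `H`-invariant, left-thick subsets `T¹, …, Tⁿ ⊆ G`. -/
theorem disjoint_thick_invariant_sets {G : Type*} [Group G]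
    (Sg : Finset G) (hgen : Subgroup.closure (Sg : Set G) = ⊤)
    (m : Mean G) (hml : m.LeftInvariant) (hmr : m.RightInvariant)
    (H : Subgroup G) (hH : Infinite (Quotient (QuotientGroup.rightRel H)))
    (n : ℕ) (hn : 1 ≤ n) :
    ∃ T : Fin n → Set G,
      -- pairwise disjoint
      (∀ k j, k ≠ j → Disjoint (T k) (T j))
      -- each left H-invariant
      ∧ (∀ k, ∀ h ∈ H, ∀ x : G, x ∈ T k ↔ h * x ∈ T k)
      -- each left-thick
      ∧ (∀ k, ∀ F : Set G, F.Finite → ∃ g : G, ∀ f ∈ F, f * g ∈ T k) :=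
  main_construction Sg hgen H hH n hn
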